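/- arXiv:1112.6296 — 3 statements merged into one kernel-verified Lean document; each statement's English description precedes it below -/
import Mathlib

section
/- Let w_1, …, w_k be a sorted edge family with k ≥ 3. Then every partial sum s_j (j = 1, …, k) is an extreme point of the polygon of the family, i.e. of the convex hull of {s_1, …, s_k} in ℝ²; in particular this convex hull is a (two-dimensional) convex polygon whose vertex set is exactly {s_1, …, s_k}. -/
open Real

/-- The argument in `[0, 2π)` of a vector of `ℝ²` (junk value for `0`). -/
noncomputable def argIn (u : ℝ × ℝ) : ℝ :=
  if 0 ≤ Complex.arg ⟨u.1, u.2⟩ then Complex.arg ⟨u.1, u.2⟩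
  else Complex.arg ⟨u.1, u.2⟩ + 2 * Real.pi

noncomputable def cAbs (u : ℝ × ℝ) : ℝ := ‖(⟨u.1, u.2⟩ : ℂ)‖

lemma argIn_nonneg (u : ℝ × ℝ) : 0 ≤ argIn u := by
  unfold argIn; split
  · assumption
  · nlinarith [Complex.neg_pi_lt_arg (⟨u.1, u.2⟩ : ℂ), Real.pi_pos]

lemma argIn_lt_two_pi (u : ℝ × ℝ) : argIn u < 2 * π := by
  unfold argIn; split
  · nlinarith [Complex.arg_le_pi (⟨u.1, u.2⟩ : ℂ), Real.pi_pos]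
  · nlinarith [Complex.arg_le_pi (⟨u.1, u.2⟩ : ℂ), Real.pi_pos]

lemma cAbs_pos {u : ℝ × ℝ} (hu : u ≠ 0) : 0 < cAbs u := by
  have : (⟨u.1, u.2⟩ : ℂ) ≠ 0 := by
    simp [Complex.ext_iff, Prod.ext_iff] at *
    intro h1 h2; exact hu h1 h2
  simpa [cAbs] using (norm_pos_iff.mpr this)

lemma cos_sin_argIn {u : ℝ × ℝ} (hu : u ≠ 0) :
    u.1 = cAbs u * Real.cos (argIn u) ∧ u.2 = cAbs u * Real.sin (argIn u) := by
  have hz : (⟨u.1, u.2⟩ : ℂ) ≠ 0 := by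
    simp [Complex.ext_iff, Prod.ext_iff] at *
    intro h1 h2; exact hu h1 h2
  have h1 : Real.cos (argIn u) = Real.cos (Complex.arg ⟨u.1, u.2⟩) := by
    unfold argIn; split
    · rfl
    · rw [Real.cos_add_two_pi]
  have h2 : Real.sin (argIn u) = Real.sin (Complex.arg ⟨u.1, u.2⟩) := by
    unfold argIn; split
    · rfl
    · rw [Real.sin_add_two_pi]
  have hc := Complex.cos_arg hz
  have hs := Complex.sin_arg (⟨u.1, u.2⟩ : ℂ)
  have habs : cAbs u ≠ 0 := ne_of_gt (cAbs_pos hu)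
  constructor
  · rw [h1, hc, cAbs]; field_simp
  · rw [h2, hs, cAbs]; field_simp

/-- The linear functional `u ↦ sin φ * u.1 - cos φ * u.2`. -/
noncomputable def lfun (φ : ℝ) : (ℝ × ℝ) →ₗ[ℝ] ℝ :=
  Real.sin φ • LinearMap.fst ℝ ℝ ℝ - Real.cos φ • LinearMap.snd ℝ ℝ ℝ

lemma lfun_apply (φ : ℝ) (u : ℝ × ℝ) : lfun φ u = Real.sin φ * u.1 - Real.cos φ * u.2 := rfl

lemma lfun_eq {φ : ℝ} {u : ℝ × ℝ} (hu : u ≠ 0) {a : ℝ}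
    (ha : a = argIn u ∨ a = argIn u + 2 * π) :
    lfun φ u = -(cAbs u * Real.sin (a - φ)) := by
  obtain ⟨h1, h2⟩ := cos_sin_argIn hu
  have hs : Real.sin (a - φ) = Real.sin (argIn u - φ) := by
    rcases ha with rfl | rfl
    · rfl
    · rw [show argIn u + 2 * π - φ = argIn u - φ + 2 * π by ring, Real.sin_add_two_pi]
  rw [lfun_apply, h1, h2, hs, Real.sin_sub]
  ring

lemma lfun_neg {φ : ℝ} {u : ℝ × ℝ} (hu : u ≠ 0) {a : ℝ}
    (ha : a = argIn u ∨ a = argIn u + 2 * π) (h1 : φ < a) (h2 : a < φ + π) :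
    lfun φ u < 0 := by
  rw [lfun_eq hu ha]
  have : 0 < Real.sin (a - φ) := Real.sin_pos_of_pos_of_lt_pi (by linarith) (by linarith)
  nlinarith [cAbs_pos hu]

lemma lfun_pos {φ : ℝ} {u : ℝ × ℝ} (hu : u ≠ 0) {a : ℝ}
    (ha : a = argIn u ∨ a = argIn u + 2 * π) (h1 : φ + π < a) (h2 : a < φ + 2 * π) :
    0 < lfun φ u := by
  rw [lfun_eq hu ha]
  have h3 : Real.sin (a - φ - π) = -Real.sin (a - φ) := Real.sin_sub_pi _
  have : 0 < Real.sin (a - φ - π) :=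
    Real.sin_pos_of_pos_of_lt_pi (by linarith) (by linarith)
  nlinarith [cAbs_pos hu]

/-- Two nonzero vectors whose arguments differ (mod `2π`) by something with nonzero sine
are linearly independent. -/
lemma linIndep_of_sin_ne {u v : ℝ × ℝ} (hu : u ≠ 0) (hv : v ≠ 0)
    (h : Real.sin (argIn v - argIn u) ≠ 0) : LinearIndependent ℝ ![u, v] := by
  have hcross : u.1 * v.2 - u.2 * v.1 ≠ 0 := by
    obtain ⟨hu1, hu2⟩ := cos_sin_argIn hu
    obtain ⟨hv1, hv2⟩ := cos_sin_argIn hv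
    rw [hu1, hu2, hv1, hv2]
    have : cAbs u * Real.cos (argIn u) * (cAbs v * Real.sin (argIn v)) -
        cAbs u * Real.sin (argIn u) * (cAbs v * Real.cos (argIn v)) =
        cAbs u * cAbs v * Real.sin (argIn v - argIn u) := by
      rw [Real.sin_sub]; ring
    rw [this]
    have := cAbs_pos hu
    have := cAbs_pos hv
    positivity
  rw [LinearIndependent.pair_iff]
  intro s t hst
  have h1 : s * u.1 + t * v.1 = 0 := congrArg Prod.fst hst
  have h2 : s * u.2 + t * v.2 = 0 := congrArg Prod.snd hst
  constructor
  · have : s * (u.1 * v.2 - u.2 * v.1) = 0 := by linear_combination v.2 * h1 - v.1 * h2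
    exact (mul_eq_zero.1 this).resolve_right hcross
  · have : t * (u.1 * v.2 - u.2 * v.1) = 0 := by linear_combination u.1 * h2 - u.2 * h1
    exact (mul_eq_zero.1 this).resolve_right hcross

lemma le_and_eq_of_strict_max {s : Finset (ℝ × ℝ)} {x : ℝ × ℝ} (hx : x ∈ s)
    {l : (ℝ × ℝ) →ₗ[ℝ] ℝ} (hmax : ∀ y ∈ s, y ≠ x → l y < l x) :
    ∀ z ∈ convexHull ℝ (s : Set (ℝ × ℝ)), l z ≤ l x ∧ (l z = l x → z = x) := by
  intro z hz
  obtain ⟨μ, h0, h1, hsum⟩ := Finset.mem_convexHull'.1 hz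
  have hle : ∀ y ∈ s, μ y * l y ≤ μ y * l x := by
    intro y hy
    rcases eq_or_ne y x with rfl | hne
    · exact le_rfl
    · exact mul_le_mul_of_nonneg_left (le_of_lt (hmax y hy hne)) (h0 y hy)
  have hlz : l z = ∑ y ∈ s, μ y * l y := by
    rw [← hsum, map_sum]
    exact Finset.sum_congr rfl fun y _ => by rw [map_smul, smul_eq_mul]
  have hsum_le : l z ≤ l x := by
    rw [hlz]
    calc ∑ y ∈ s, μ y * l y ≤ ∑ y ∈ s, μ y * l x := Finset.sum_le_sum hle
    _ = l x := by rw [← Finset.sum_mul, h1, one_mul]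
  refine ⟨hsum_le, fun heq => ?_⟩
  have hall : ∀ y ∈ s, μ y * l y = μ y * l x := by
    rw [← Finset.sum_eq_sum_iff_of_le hle]
    rw [← hlz, heq, ← Finset.sum_mul, h1, one_mul]
  have hzero : ∀ y ∈ s, y ≠ x → μ y = 0 := by
    intro y hy hne
    have := hall y hy
    rcases mul_eq_mul_left_iff.1 (by linarith [this] : μ y * l y = μ y * l x) with h | h
    · exact absurd h (ne_of_lt (hmax y hy hne))
    · exact h
  have : z = ∑ y ∈ s, μ y • x := by
    rw [← hsum]
    refine Finset.sum_congr rfl fun y hy => ?_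
    rcases eq_or_ne y x with rfl | hne
    · rfl
    · rw [hzero y hy hne, zero_smul, zero_smul]
  rw [this, ← Finset.sum_smul, h1, one_smul]

lemma extreme_of_strict_max {ι : Type*} [Fintype ι] (p : ι → ℝ × ℝ) (j : ι)
    {l : (ℝ × ℝ) →ₗ[ℝ] ℝ} (hmax : ∀ i : ι, p i ≠ p j → l (p i) < l (p j)) :
    p j ∈ Set.extremePoints ℝ (convexHull ℝ (Set.range p)) := by
  have hrange : Set.range p = ↑(Finset.univ.image p) := by simp
  have hmem : p j ∈ Finset.univ.image p := Finset.mem_image_of_mem p (Finset.mem_univ j)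
  have hmax' : ∀ y ∈ Finset.univ.image p, y ≠ p j → l y < l (p j) := by
    intro y hy hne
    obtain ⟨i, _, rfl⟩ := Finset.mem_image.1 hy
    exact hmax i hne
  have key := le_and_eq_of_strict_max hmem hmax'
  rw [hrange]
  refine ⟨subset_convexHull ℝ _ hmem, fun x₁ hx₁ x₂ hx₂ hseg => ?_⟩
  obtain ⟨a, b, ha, hb, hab, hx⟩ := hseg
  have e1 := key x₁ hx₁
  have e2 := key x₂ hx₂
  have hsum : a * l x₁ + b * l x₂ = l (p j) := by
    rw [← hx]; simp [map_add, map_smul, smul_eq_mul]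
  have hcomb : a * l (p j) + b * l (p j) = l (p j) := by rw [← add_mul, hab, one_mul]
  have h1 : l x₁ = l (p j) := by
    by_contra hne
    have hlt : l x₁ < l (p j) := lt_of_le_of_ne e1.1 hne
    nlinarith [mul_pos ha (sub_pos.2 hlt), mul_nonneg hb.le (sub_nonneg.2 e2.1), hcomb]
  have h2 : l x₂ = l (p j) := by
    by_contra hne
    have hlt : l x₂ < l (p j) := lt_of_le_of_ne e2.1 hne
    nlinarith [mul_pos hb (sub_pos.2 hlt), mul_nonneg ha.le (sub_nonneg.2 e1.1), hcomb]
  exact e1.2 h1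

/-- A sorted edge family: a finite sequence of nonzero vectors of `ℝ²` summing to `0`,
whose arguments in `[0, 2π)` are strictly increasing. -/
def IsSortedEdgeFamily {k : ℕ} (w : Fin k → ℝ × ℝ) : Prop :=
  (∀ i, w i ≠ 0) ∧ (∑ i, w i = 0) ∧
  ∀ i j : Fin k, i < j → argIn (w i) < argIn (w j)

/-- The partial sums `s_j = w_1 + ⋯ + w_j` of an edge family. -/
noncomputable def partialSum {k : ℕ} (w : Fin k → ℝ × ℝ) (j : Fin k) : ℝ × ℝ :=
  ∑ i ∈ Finset.Iic j, w i

lemma fin_val_add_one {k : ℕ} [NeZero k] (hk : 2 ≤ k) (i : Fin k) :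
    ((i + 1 : Fin k)).val = if i.val = k - 1 then 0 else i.val + 1 := by
  have hone : (1 : Fin k).val = 1 := by
    rw [Fin.val_one']; exact Nat.mod_eq_of_lt (by omega)
  rw [Fin.val_add, hone]
  rcases eq_or_ne i.val (k - 1) with h | h
  · simp only [h, if_true]
    have : k - 1 + 1 = k := by omega
    rw [this, Nat.mod_self]
  · simp only [h, if_false]
    exact Nat.mod_eq_of_lt (by have := i.isLt; omega)

lemma partialSum_step {k : ℕ} [NeZero k] (hk : 2 ≤ k) (w : Fin k → ℝ × ℝ)
    (hsum : ∑ i, w i = 0) (i : Fin k) :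
    partialSum w (i + 1) = partialSum w i + w (i + 1) := by
  have hval := fin_val_add_one hk i
  rcases eq_or_ne i.val (k - 1) with hlast | hne
  · rw [hlast, if_pos rfl] at hval
    have hIic0 : Finset.Iic (i + 1) = {i + 1} := by
      ext x
      simp only [Finset.mem_Iic, Finset.mem_singleton, Fin.le_def, hval, Nat.le_zero]
      exact ⟨fun h => Fin.ext (by rw [hval]; exact h), fun h => by rw [h, hval]⟩
    have hIicAll : Finset.Iic i = Finset.univ := by
      ext x; simp only [Finset.mem_Iic, Finset.mem_univ, iff_true, Fin.le_def, hlast]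
      have := x.isLt; omega
    unfold partialSum
    rw [hIic0, hIicAll, Finset.sum_singleton, hsum, zero_add]
  · rw [if_neg hne] at hval
    have hIns : Finset.Iic (i + 1) = insert (i + 1) (Finset.Iic i) := by
      ext x
      simp only [Finset.mem_Iic, Finset.mem_insert, Fin.le_def, hval]
      constructor
      · intro h
        rcases eq_or_lt_of_le h with h' | h'
        · left; exact Fin.ext (by rw [hval]; exact h')
        · right; omega
      · rintro (rfl | h)
        · exact le_of_eq hval
        · omega
    have hnotmem : (i + 1 : Fin k) ∉ Finset.Iic i := by
      simp only [Finset.mem_Iic, Fin.le_def, hval]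
      omega
    unfold partialSum
    rw [hIns, Finset.sum_insert hnotmem, add_comm]

def eIdx (k : ℕ) (hk : 0 < k) (j : Fin k) (t : ℕ) : Fin k :=
  ⟨(j.val + 1 + t) % k, Nat.mod_lt _ hk⟩

lemma eIdx_val (k : ℕ) (hk : 0 < k) (j : Fin k) (t : ℕ) (ht : t < k) :
    (eIdx k hk j t).val = if j.val + 1 + t < k then j.val + 1 + t else j.val + 1 + t - k := by
  have hj := j.isLt
  split_ifs with h
  · exact Nat.mod_eq_of_lt h
  · show (j.val + 1 + t) % k = _
    rw [Nat.mod_eq_sub_mod (by omega), Nat.mod_eq_of_lt (by omega)]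

lemma eIdx_succ {k : ℕ} (hk2 : 2 ≤ k) (j : Fin k) (t : ℕ) :
    haveI : NeZero k := ⟨by omega⟩
    eIdx k (by omega) j (t + 1) = eIdx k (by omega) j t + 1 := by
  haveI : NeZero k := ⟨by omega⟩
  apply Fin.ext
  rw [fin_val_add_one hk2]
  have h1 : (eIdx k (by omega) j (t + 1)).val = ((eIdx k (by omega) j t).val + 1) % k := by
    show (j.val + 1 + (t + 1)) % k = ((j.val + 1 + t) % k + 1) % k
    rw [show j.val + 1 + (t + 1) = (j.val + 1 + t) + 1 by omega,
      Nat.add_mod (j.val + 1 + t) 1 k, Nat.mod_eq_of_lt (show 1 < k by omega)]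
  rcases eq_or_ne ((eIdx k (by omega : 0 < k) j t).val) (k - 1) with h | h
  · rw [if_pos h, h1, h, show k - 1 + 1 = k by omega, Nat.mod_self]
  · rw [if_neg h, h1, Nat.mod_eq_of_lt (by have := (eIdx k (by omega : 0 < k) j t).isLt; omega)]

lemma eIdx_last {k : ℕ} (hk2 : 2 ≤ k) (j : Fin k) :
    eIdx k (by omega) j (k - 1) = j := by
  apply Fin.ext
  show (j.val + 1 + (k - 1)) % k = j.val
  rw [show j.val + 1 + (k - 1) = j.val + k by omega, Nat.add_mod_right,
    Nat.mod_eq_of_lt j.isLt]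

lemma eIdx_zero {k : ℕ} (hk2 : 2 ≤ k) (j : Fin k) :
    haveI : NeZero k := ⟨by omega⟩
    eIdx k (by omega) j 0 = j + 1 := by
  haveI : NeZero k := ⟨by omega⟩
  apply Fin.ext
  rw [fin_val_add_one hk2]
  show (j.val + 1 + 0) % k = _
  have hj := j.isLt
  rcases eq_or_ne j.val (k - 1) with h | h
  · rw [if_pos h, h, show k - 1 + 1 + 0 = k by omega, Nat.mod_self]
  · rw [if_neg h, Nat.mod_eq_of_lt (by omega)]

lemma partialSum_eIdx {k : ℕ} (hk2 : 2 ≤ k) (w : Fin k → ℝ × ℝ) (hsum : ∑ i, w i = 0)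
    (j : Fin k) (t : ℕ) :
    partialSum w (eIdx k (by omega) j t) =
      partialSum w j + ∑ t' ∈ Finset.range (t + 1), w (eIdx k (by omega) j t') := by
  haveI : NeZero k := ⟨by omega⟩
  induction t with
  | zero =>
    rw [eIdx_zero hk2, partialSum_step hk2 w hsum j, Finset.sum_range_one, eIdx_zero hk2]
  | succ t ih =>
    rw [Finset.sum_range_succ, eIdx_succ hk2, partialSum_step hk2 w hsum, ih,
      ← eIdx_succ hk2, add_assoc]

noncomputable def aIdx {k : ℕ} (hk : 0 < k) (w : Fin k → ℝ × ℝ) (j : Fin k) (t : ℕ) : ℝ :=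
  argIn (w (eIdx k hk j t)) + if eIdx k hk j t ≤ j then 2 * π else 0

lemma eIdx_le_iff {k : ℕ} (hk : 0 < k) (j : Fin k) (t : ℕ) (ht : t < k) :
    eIdx k hk j t ≤ j ↔ k ≤ j.val + 1 + t := by
  rw [Fin.le_def, eIdx_val k hk j t ht]
  have := j.isLt
  split_ifs with h <;> omega

lemma aIdx_def {k : ℕ} (hk : 0 < k) (w : Fin k → ℝ × ℝ) (j : Fin k) (t : ℕ) :
    aIdx hk w j t = argIn (w (eIdx k hk j t)) ∨
      aIdx hk w j t = argIn (w (eIdx k hk j t)) + 2 * π := by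
  unfold aIdx
  split_ifs
  · right; rfl
  · left; rw [add_zero]

lemma aIdx_mono {k : ℕ} (hk : 0 < k) (w : Fin k → ℝ × ℝ)
    (hmono : ∀ i j : Fin k, i < j → argIn (w i) < argIn (w j)) (j : Fin k)
    {t t' : ℕ} (h : t < t') (hle : t' ≤ k - 1) : aIdx hk w j t < aIdx hk w j t' := by
  have ht : t < k := by omega
  have ht' : t' < k := by omega
  have hw1 := eIdx_le_iff hk j t ht
  have hw2 := eIdx_le_iff hk j t' ht'
  have hjlt := j.isLt
  unfold aIdx
  by_cases c2 : eIdx k hk j t' ≤ j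
  · by_cases c1 : eIdx k hk j t ≤ j
    · have hlt : eIdx k hk j t < eIdx k hk j t' := by
        have h1 := hw1.mp c1
        have h2 := hw2.mp c2
        rw [Fin.lt_def, eIdx_val k hk j t ht, eIdx_val k hk j t' ht']
        split_ifs <;> omega
      rw [if_pos c1, if_pos c2]
      have := hmono _ _ hlt
      linarith
    · rw [if_neg c1, if_pos c2]
      have h1 := argIn_lt_two_pi (w (eIdx k hk j t))
      have h2 := argIn_nonneg (w (eIdx k hk j t'))
      linarith
  · have c1 : ¬ eIdx k hk j t ≤ j := fun hc => c2 (hw2.mpr (by have := hw1.mp hc; omega))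
    have h1 : ¬ k ≤ j.val + 1 + t := fun hh => c1 (hw1.mpr hh)
    have h2 : ¬ k ≤ j.val + 1 + t' := fun hh => c2 (hw2.mpr hh)
    have hlt : eIdx k hk j t < eIdx k hk j t' := by
      rw [Fin.lt_def, eIdx_val k hk j t ht, eIdx_val k hk j t' ht']
      split_ifs <;> omega
    rw [if_neg c1, if_neg c2]
    have := hmono _ _ hlt
    linarith

lemma exists_exposing {k : ℕ} (hk : 3 ≤ k) (w : Fin k → ℝ × ℝ)
    (hw : IsSortedEdgeFamily w) (j : Fin k) :
    ∃ φ : ℝ, ∀ i : Fin k, i ≠ j →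
      lfun φ (partialSum w i) < lfun φ (partialSum w j) := by
  haveI : NeZero k := ⟨by omega⟩
  obtain ⟨hnz, hsum, hmono⟩ := hw
  have hk0 : 0 < k := by omega
  have hk2 : 2 ≤ k := by omega
  have hjlt := j.isLt
  set a : ℕ → ℝ := aIdx hk0 w j with ha_def
  -- the last rescaled angle
  have ha_last : a (k - 1) = argIn (w j) + 2 * π := by
    rw [ha_def]
    unfold aIdx
    rw [show eIdx k hk0 j (k - 1) = j from eIdx_last hk2 j, if_pos le_rfl]
  -- θ j < a 0
  have hja0 : argIn (w j) < a 0 := by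
    rw [ha_def]; unfold aIdx
    by_cases c : eIdx k hk0 j 0 ≤ j
    · rw [if_pos c]
      have := argIn_lt_two_pi (w j)
      have := argIn_nonneg (w (eIdx k hk0 j 0))
      linarith
    · rw [if_neg c, add_zero]
      exact hmono _ _ (not_le.mp c)
  set φ : ℝ := (argIn (w j) + a 0) / 2 with hφ_def
  have hφ1 : argIn (w j) < φ := by rw [hφ_def]; linarith
  have hφ2 : φ < a 0 := by rw [hφ_def]; linarith
  have ha_lb : ∀ t, t ≤ k - 1 → φ < a t := by
    intro t htk
    rcases Nat.eq_zero_or_pos t with rfl | htpos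
    · exact hφ2
    · exact lt_trans hφ2 (aIdx_mono hk0 w hmono j htpos htk)
  have ha_ub : ∀ t, t ≤ k - 1 → a t ≤ argIn (w j) + 2 * π := by
    intro t htk
    rcases eq_or_lt_of_le htk with rfl | hlt
    · exact le_of_eq ha_last
    · rw [← ha_last]
      exact le_of_lt (aIdx_mono hk0 w hmono j hlt le_rfl)
  -- total sum of edges around the cycle is zero
  have hveczero : ∑ t' ∈ Finset.range k, w (eIdx k hk0 j t') = 0 := by
    have h := partialSum_eIdx hk2 w hsum j (k - 1)
    rw [show eIdx k (by omega : 0 < k) j (k - 1) = j from eIdx_last hk2 j,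
      show k - 1 + 1 = k by omega] at h
    exact (left_eq_add.mp h)
  have htotal : ∑ t' ∈ Finset.range k, lfun φ (w (eIdx k hk0 j t')) = 0 := by
    rw [← map_sum, hveczero, map_zero]
  -- strict negativity of proper prefix sums
  have hneg : ∀ t : ℕ, t + 1 < k →
      ∑ t' ∈ Finset.range (t + 1), lfun φ (w (eIdx k hk0 j t')) < 0 := by
    intro t ht
    by_cases hc : a (t + 1) ≤ φ + π
    · apply Finset.sum_neg ?_ (Finset.nonempty_range_iff.mpr (by omega))
      intro t' ht'
      have ht'' : t' < t + 1 := Finset.mem_range.mp ht'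
      have h1 : φ < a t' := ha_lb t' (by omega)
      have h2 : a t' < a (t + 1) := aIdx_mono hk0 w hmono j ht'' (by omega)
      exact lfun_neg (hnz _) (aIdx_def hk0 w j t') h1 (by linarith)
    · push_neg at hc
      have hsplit : ∑ t' ∈ Finset.range (t + 1), lfun φ (w (eIdx k hk0 j t')) +
          ∑ t' ∈ Finset.Ico (t + 1) k, lfun φ (w (eIdx k hk0 j t')) = 0 := by
        rw [← htotal, Finset.range_eq_Ico, Finset.range_eq_Ico]
        exact Finset.sum_Ico_consecutive (fun t' => lfun φ (w (eIdx k hk0 j t'))) (m := 0) (n := t + 1) (k := k) (by omega) (by omega)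
      have hpos : 0 < ∑ t' ∈ Finset.Ico (t + 1) k, lfun φ (w (eIdx k hk0 j t')) := by
        apply Finset.sum_pos ?_ ⟨t + 1, Finset.mem_Ico.mpr ⟨le_rfl, by omega⟩⟩
        intro t' ht'
        obtain ⟨hl, hr⟩ := Finset.mem_Ico.mp ht'
        have h1 : φ + π < a t' := by
          rcases eq_or_lt_of_le hl with rfl | hlt
          · exact hc
          · exact lt_trans hc (aIdx_mono hk0 w hmono j hlt (by omega))
        have h2 : a t' < φ + 2 * π := by
          have := ha_ub t' (by omega)
          linarith
        exact lfun_pos (hnz _) (aIdx_def hk0 w j t') h1 h2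
      linarith
  refine ⟨φ, fun i hi => ?_⟩
  set t : ℕ := if j < i then i.val - j.val - 1 else i.val + k - j.val - 1 with ht_def
  have hilt := i.isLt
  have hij : i.val ≠ j.val := fun h => hi (Fin.ext h)
  have he : eIdx k hk0 j t = i := by
    apply Fin.ext
    show (j.val + 1 + t) % k = i.val
    by_cases c : j < i
    · rw [if_pos c] at ht_def
      have hc : j.val < i.val := c
      rw [ht_def, show j.val + 1 + (i.val - j.val - 1) = i.val by omega,
        Nat.mod_eq_of_lt i.isLt]
    · rw [if_neg c] at ht_def
      have hc : i.val < j.val := by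
        rcases lt_or_ge i.val j.val with h | h
        · exact h
        · exact absurd (Fin.lt_def.mpr (by omega : j.val < i.val)) c
      rw [ht_def, show j.val + 1 + (i.val + k - j.val - 1) = i.val + k by omega,
        Nat.add_mod_right, Nat.mod_eq_of_lt i.isLt]
  have htlt : t + 1 < k := by
    rw [ht_def]
    split_ifs with c
    · have hc : j.val < i.val := c
      omega
    · have hc : i.val < j.val := by
        rcases lt_or_ge i.val j.val with h | h
        · exact h
        · exact absurd (Fin.lt_def.mpr (by omega : j.val < i.val)) c
      omega
  have hSt := partialSum_eIdx hk2 w hsum j t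
  rw [show eIdx k (by omega : 0 < k) j t = i from he] at hSt
  rw [hSt, map_add, map_sum]
  have := hneg t htlt
  linarith

lemma sin_ne_zero_of_ioo {x : ℝ} (h0 : 0 < x) (h2 : x < 2 * π) (hpi : x ≠ π) :
    Real.sin x ≠ 0 := by
  rcases lt_trichotomy x π with h | h | h
  · exact ne_of_gt (Real.sin_pos_of_pos_of_lt_pi h0 h)
  · exact absurd h hpi
  · have h3 : Real.sin (x - π) = -Real.sin x := Real.sin_sub_pi x
    have : 0 < Real.sin (x - π) := Real.sin_pos_of_pos_of_lt_pi (by linarith) (by linarith)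
    intro hc; rw [hc] at h3; linarith

/-- For a sorted edge family with `k ≥ 3`, every partial sum is an extreme point of the
polygon of the family (the convex hull of the partial sums); in particular the set of
extreme points (the vertex set) is exactly the set of partial sums, and the polygon is
two-dimensional. -/
theorem partialSum_mem_extremePoints {k : ℕ} (hk : 3 ≤ k) (w : Fin k → ℝ × ℝ)
    (hw : IsSortedEdgeFamily w) :
    (∀ j : Fin k, partialSum w j ∈
        Set.extremePoints ℝ (convexHull ℝ (Set.range (partialSum w)))) ∧
    Set.extremePoints ℝ (convexHull ℝ (Set.range (partialSum w))) =
      Set.range (partialSum w) ∧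
    affineSpan ℝ (Set.range (partialSum w)) = ⊤ := by
  haveI : NeZero k := ⟨by omega⟩
  obtain ⟨hnz, hsum, hmono⟩ := hw
  have hk2 : 2 ≤ k := by omega
  have hA : ∀ j : Fin k, partialSum w j ∈
      Set.extremePoints ℝ (convexHull ℝ (Set.range (partialSum w))) := by
    intro j
    obtain ⟨φ, hφ⟩ := exists_exposing hk w ⟨hnz, hsum, hmono⟩ j
    exact extreme_of_strict_max (partialSum w) j
      (fun i hne => hφ i (fun h => hne (by rw [h])))
  refine ⟨hA, ?_, ?_⟩
  · apply Set.Subset.antisymm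
    · exact extremePoints_convexHull_subset
    · rintro _ ⟨j, rfl⟩
      exact hA j
  · -- affine span is everything
    have hW : ∀ m : Fin k, w m ∈ vectorSpan ℝ (Set.range (partialSum w)) := by
      intro m
      have hstep := partialSum_step hk2 w hsum (m - 1)
      rw [sub_add_cancel] at hstep
      have : w m = partialSum w m -ᵥ partialSum w (m - 1) := by
        rw [vsub_eq_sub, hstep]; abel
      rw [this]
      exact vsub_mem_vectorSpan ℝ (Set.mem_range_self _) (Set.mem_range_self _)
    set i0 : Fin k := ⟨0, by omega⟩
    set i1 : Fin k := ⟨1, by omega⟩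
    set i2 : Fin k := ⟨2, by omega⟩
    have h01 : argIn (w i0) < argIn (w i1) := hmono _ _ (by simp [i0, i1, Fin.lt_def])
    have h12 : argIn (w i1) < argIn (w i2) := hmono _ _ (by simp [i1, i2, Fin.lt_def])
    have h0nn := argIn_nonneg (w i0)
    have h2lt := argIn_lt_two_pi (w i2)
    obtain ⟨a, b, hab⟩ : ∃ a b : Fin k,
        Real.sin (argIn (w b) - argIn (w a)) ≠ 0 := by
      by_cases h : argIn (w i1) - argIn (w i0) = π
      · refine ⟨i1, i2, ?_⟩
        have h1lt := argIn_lt_two_pi (w i1)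
        exact ne_of_gt (Real.sin_pos_of_pos_of_lt_pi (by linarith) (by linarith))
      · refine ⟨i0, i1, ?_⟩
        have h1lt := argIn_lt_two_pi (w i1)
        exact sin_ne_zero_of_ioo (by linarith) (by linarith) h
    have hli : LinearIndependent ℝ ![w a, w b] := linIndep_of_sin_ne (hnz a) (hnz b) hab
    have hcard : Fintype.card (Fin 2) = Module.finrank ℝ (ℝ × ℝ) := by
      simp [Module.finrank_prod]
    have hspan : Submodule.span ℝ (Set.range ![w a, w b]) = ⊤ :=
      hli.span_eq_top_of_card_eq_finrank hcard
    have hvs : vectorSpan ℝ (Set.range (partialSum w)) = ⊤ := by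
      rw [eq_top_iff, ← hspan]
      apply Submodule.span_le.mpr
      rintro x ⟨i, rfl⟩
      fin_cases i
      · simpa using hW a
      · simpa using hW b
    have hne : (Set.range (partialSum w)).Nonempty := ⟨partialSum w i0, Set.mem_range_self _⟩
    exact (AffineSubspace.affineSpan_eq_top_iff_vectorSpan_eq_top_of_nonempty ℝ (ℝ × ℝ) (ℝ × ℝ) hne).mpr hvs
end

section
/- Let P and Q be the convex hulls of two nonempty finite subsets of ℝ², and let vol denote two-dimensional Lebesgue measure. Then vol(P + Q) ≥ vol(P) + vol(Q), where P + Q = { a + b : a ∈ P, b ∈ Q } is the Minkowski sum. Moreover, equality holds if and only if P is a singleton, or Q is a singleton, or there exist a nonzero vector u ∈ ℝ² and points a, b ∈ ℝ² with P ⊆ a + ℝ·u and Q ⊆ b + ℝ·u (i.e. P and Q are contained in parallel lines). -/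
open Pointwise MeasureTheory Set


-- linear functional
lemma lin_ilm (α β : ℝ) : IsLinearMap ℝ (fun p : ℝ × ℝ => α * p.1 + β * p.2) := by
  constructor <;> intros <;> simp [Prod.fst_add, Prod.snd_add, smul_eq_mul] <;> ring

lemma lin_cont (α β : ℝ) : Continuous (fun p : ℝ × ℝ => α * p.1 + β * p.2) := by fun_prop

-- hyperplane has measure zero
lemma hyperplane_null (α β c : ℝ) (h : ¬(α = 0 ∧ β = 0)) :
    volume {x : ℝ × ℝ | α * x.1 + β * x.2 = c} = 0 := by
  set L : (ℝ × ℝ) →ₗ[ℝ] ℝ := IsLinearMap.mk' _ (lin_ilm α β)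
  have hL : ∃ y : ℝ × ℝ, L y ≠ 0 := by
    rcases not_and_or.1 h with h' | h'
    · exact ⟨(1,0), by simp [L, IsLinearMap.mk'_apply, h']⟩
    · exact ⟨(0,1), by simp [L, IsLinearMap.mk'_apply, h']⟩
  have hker : LinearMap.ker L ≠ ⊤ := by
    obtain ⟨y, hy⟩ := hL
    intro ht
    exact hy (LinearMap.mem_ker.1 (ht ▸ Submodule.mem_top))
  have h0 : volume (LinearMap.ker L : Set (ℝ × ℝ)) = 0 :=
    Measure.addHaar_submodule volume _ hker
  by_cases hc : ∃ x₀ : ℝ × ℝ, L x₀ = c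
  · obtain ⟨x₀, hx₀⟩ := hc
    have : {x : ℝ × ℝ | α * x.1 + β * x.2 = c} = (fun y => x₀ + y) '' (LinearMap.ker L : Set (ℝ × ℝ)) := by
      ext x
      simp only [Set.image_add_left, Set.mem_preimage, SetLike.mem_coe, LinearMap.mem_ker,
        Set.mem_setOf_eq, map_add, map_neg]
      have : L x = α * x.1 + β * x.2 := rfl
      constructor
      · intro hx; rw [this] at *; linarith [hx₀]
      · intro hx; rw [← this]; linarith [hx₀]
    rw [this, Set.image_add_left, measure_preimage_add]
    exact h0
  · have : {x : ℝ × ℝ | α * x.1 + β * x.2 = c} = ∅ := by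
      ext x; simp only [Set.mem_setOf_eq, Set.mem_empty_iff_false, iff_false]
      intro hx; exact hc ⟨x, hx⟩
    simp [this]
/-- segment gain: a convex compact set with nonempty interior, unioned with a nontrivial
translate, has strictly bigger volume. -/
lemma segment_gain {K : Set (ℝ × ℝ)} (hK : IsCompact K) (hKc : Convex ℝ K)
    (hKi : (interior K).Nonempty) {u : ℝ × ℝ} (hu : u ≠ 0) :
    volume K < volume (K ∪ (fun x => u + x) '' K) := by
  obtain ⟨z, hz⟩ := hKi
  have hzK : z ∈ K := interior_subset hz
  set L : ℝ × ℝ → ℝ := fun p => u.1 * p.1 + u.2 * p.2 with hLdef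
  have hLcont : Continuous L := by fun_prop
  obtain ⟨m, hmK, hmax⟩ := hK.exists_isMaxOn ⟨z, hzK⟩ hLcont.continuousOn
  set M : ℝ := L m with hM
  set δ : ℝ := u.1 ^ 2 + u.2 ^ 2 with hδ
  have hu12 : u.1 ≠ 0 ∨ u.2 ≠ 0 := by
    by_contra h; push_neg at h; exact hu (Prod.ext h.1 h.2)
  have hδpos : 0 < δ := by rcases hu12 with h' | h' <;> positivity
  have hLz : L z ≤ M := hmax hzK
  -- an open subset of K with L > M - δ
  set U : Set (ℝ × ℝ) := interior K ∩ {x | M - δ < L x} with hU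
  have hUopen : IsOpen U := isOpen_interior.inter (isOpen_lt continuous_const hLcont)
  have hUne : U.Nonempty := by
    set d : ℝ := M - L z with hd
    have hd0 : 0 ≤ d := by simp [hd]; linarith
    have hdd : 0 < d + δ := by linarith
    set t : ℝ := d / (d + δ) with ht
    have htnn : 0 ≤ t := by positivity
    have h1t : 1 - t = δ / (d + δ) := by
      rw [ht, eq_div_iff hdd.ne']; field_simp; ring
    have h1tpos : 0 < 1 - t := by rw [h1t]; positivity
    refine ⟨(1 - t) • z + t • m, ?_, ?_⟩
    · exact hKc.combo_interior_self_subset_interior h1tpos htnn (by ring)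
        (Set.add_mem_add (Set.smul_mem_smul_set hz) (Set.smul_mem_smul_set hmK))
    · have heval : L ((1 - t) • z + t • m) = (1 - t) * L z + t * L m := by
        simp [hLdef, Prod.smul_fst, Prod.smul_snd, smul_eq_mul]; ring
      rw [Set.mem_setOf_eq, heval]
      have h2 : (1 - t) * d < δ := by
        rw [h1t, div_mul_eq_mul_div, div_lt_iff₀ hdd]
        nlinarith
      have h3 : (1 - t) * L z + t * L m = M - (1 - t) * d := by simp [hd]; ring
      rw [h3]; linarith
  have hUpos : 0 < volume U := hUopen.measure_pos volume hUne
  set K' : Set (ℝ × ℝ) := K ∩ {x | L x ≤ M - δ} with hK'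
  have hK'm : MeasurableSet K' :=
    hK.measurableSet.inter ((isClosed_le hLcont continuous_const).measurableSet)
  have hdisj : Disjoint K' U := by
    rw [Set.disjoint_left]
    rintro x ⟨-, hx2⟩ ⟨-, hx4⟩
    simp only [Set.mem_setOf_eq] at hx2 hx4
    linarith
  have hKfin : volume K ≠ ⊤ := hK.measure_lt_top.ne
  have hK'fin : volume K' ≠ ⊤ :=
    fun h => hKfin (top_le_iff.1 (h ▸ measure_mono Set.inter_subset_left))
  have hK'lt : volume K' < volume K := by
    have hsub : U ∪ K' ⊆ K :=
      Set.union_subset (fun x hx => interior_subset hx.1) Set.inter_subset_left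
    have hun := measure_union (μ := volume) (hdisj.symm) hK'm
    calc volume K' < volume K' + volume U := ENNReal.lt_add_right hK'fin hUpos.ne'
      _ = volume (U ∪ K') := by rw [hun, add_comm]
      _ ≤ volume K := measure_mono hsub
  have hinter : K ∩ (fun x => u + x) '' K ⊆ (fun x => u + x) '' K' := by
    rintro x ⟨hxK, y, hyK, rfl⟩
    refine ⟨y, ⟨hyK, ?_⟩, rfl⟩
    have hLy : L (u + y) = δ + L y := by simp [hLdef, hδ]; ring
    have h2 : L (u + y) ≤ M := hmax hxK
    simp only [Set.mem_setOf_eq]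
    linarith
  have himg : volume ((fun x => u + x) '' K) = volume K := by
    rw [Set.image_add_left, measure_preimage_add]
  have himg' : volume ((fun x => u + x) '' K') = volume K' := by
    rw [Set.image_add_left, measure_preimage_add]
  have hintlt : volume (K ∩ (fun x => u + x) '' K) < volume K :=
    lt_of_le_of_lt (le_trans (measure_mono hinter) (le_of_eq himg')) hK'lt
  have hmeas : MeasurableSet ((fun x => u + x) '' K) :=
    (hK.image (by fun_prop : Continuous (fun x : ℝ × ℝ => u + x))).measurableSet
  have hkey := measure_union_add_inter (μ := volume) K hmeas
  by_contra hle
  push_neg at hle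
  have hcontr : volume (K ∪ (fun x => u + x) '' K) + volume (K ∩ (fun x => u + x) '' K)
      < volume K + volume K :=
    calc volume (K ∪ (fun x => u + x) '' K) + volume (K ∩ (fun x => u + x) '' K)
        ≤ volume K + volume (K ∩ (fun x => u + x) '' K) := add_le_add_left hle _
      _ < volume K + volume K := ENNReal.add_lt_add_left hKfin hintlt
  rw [hkey, himg] at hcontr
  exact lt_irrefl _ hcontr
-- edge lemma
lemma exists_edge (S : Finset (ℝ × ℝ)) {v' w' : ℝ × ℝ} (hv' : v' ∈ S) (hw' : w' ∈ S)
    (hne : v' ≠ w') :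
    ∃ α β : ℝ, ¬(α = 0 ∧ β = 0) ∧ ∃ v w : ℝ × ℝ, v ∈ S ∧ w ∈ S ∧ v ≠ w ∧
      (∀ s ∈ S, α * s.1 + β * s.2 ≤ α * v.1 + β * v.2) ∧
      α * w.1 + β * w.2 = α * v.1 + β * v.2 := by
  obtain ⟨v, hvS, hvmax⟩ := S.exists_max_image (fun s => s.1) ⟨v', hv'⟩
  by_cases hA : ∃ w ∈ S, w ≠ v ∧ w.1 = v.1
  · obtain ⟨w, hwS, hwv, hw1⟩ := hA
    refine ⟨1, 0, by simp, v, w, hvS, hwS, hwv.symm.symm.symm, ?_, ?_⟩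
    · intro s hs; simpa using hvmax s hs
    · simp [hw1]
  · push_neg at hA
    have hlt : ∀ s ∈ S, s ≠ v → s.1 < v.1 := by
      intro s hs hsv
      exact lt_of_le_of_ne (hvmax s hs) (hA s hs hsv)
    set W : Finset (ℝ × ℝ) := S.filter (· ≠ v) with hW
    have hWne : W.Nonempty := by
      rcases eq_or_ne v' v with rfl | h
      · exact ⟨w', by simp [hW, Finset.mem_filter, hw', hne.symm]⟩
      · exact ⟨v', by simp [hW, Finset.mem_filter, hv', h]⟩
    obtain ⟨w, hwW, hwmax⟩ := W.exists_max_image (fun s => (s.2 - v.2) / (v.1 - s.1)) hWne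
    have hwS : w ∈ S := (Finset.mem_filter.1 hwW).1
    have hwv : w ≠ v := by have := (Finset.mem_filter.1 hwW).2; simpa using this
    have hβ : 0 < v.1 - w.1 := sub_pos.2 (hlt w hwS hwv)
    refine ⟨w.2 - v.2, v.1 - w.1, fun h => hβ.ne' h.2, v, w, hvS, hwS, hwv.symm, ?_, by ring⟩
    intro s hs
    rcases eq_or_ne s v with rfl | hsv
    · exact le_refl _
    · have hsW : s ∈ W := Finset.mem_filter.2 ⟨hs, by simpa using hsv⟩
      have hb : 0 < v.1 - s.1 := sub_pos.2 (hlt s hs hsv)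
      have := hwmax s hsW
      rw [div_le_div_iff₀ hb hβ] at this
      nlinarith [this]
lemma line_null (a u : ℝ × ℝ) (hu : u ≠ 0) :
    volume {x : ℝ × ℝ | ∃ r : ℝ, x = a + r • u} = 0 := by
  have hspan : Submodule.span ℝ {u} ≠ (⊤ : Submodule ℝ (ℝ × ℝ)) := by
    intro h
    have h1 : Module.finrank ℝ (Submodule.span ℝ {u}) = 1 := finrank_span_singleton hu
    rw [h] at h1
    rw [finrank_top] at h1
    simp at h1
  have h0 : volume ((Submodule.span ℝ {u} : Submodule ℝ (ℝ × ℝ)) : Set (ℝ × ℝ)) = 0 :=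
    Measure.addHaar_submodule volume _ hspan
  have heq : {x : ℝ × ℝ | ∃ r : ℝ, x = a + r • u}
      = (fun y => a + y) '' ((Submodule.span ℝ {u} : Submodule ℝ (ℝ × ℝ)) : Set (ℝ × ℝ)) := by
    ext x
    simp only [Set.mem_setOf_eq, Set.mem_image, SetLike.mem_coe, Submodule.mem_span_singleton]
    constructor
    · rintro ⟨r, rfl⟩; exact ⟨r • u, ⟨r, rfl⟩, rfl⟩
    · rintro ⟨y, ⟨r, rfl⟩, rfl⟩; exact ⟨r, rfl⟩
  rw [heq, Set.image_add_left, measure_preimage_add]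
  exact h0

lemma null_to_line {P : Set (ℝ × ℝ)} (hconv : Convex ℝ P) (hne : P.Nonempty)
    (h0 : volume P = 0) :
    ∃ u : ℝ × ℝ, u ≠ 0 ∧ ∃ a : ℝ × ℝ, ∀ x ∈ P, ∃ r : ℝ, x = a + r • u := by
  have hspan : affineSpan ℝ P ≠ ⊤ := by
    intro h
    have hint : (interior P).Nonempty := hconv.interior_nonempty_iff_affineSpan_eq_top.2 h
    have := isOpen_interior.measure_pos volume hint
    have hle : volume (interior P) ≤ volume P := measure_mono interior_subset
    rw [h0] at hle
    exact absurd (le_antisymm hle zero_le) this.ne'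
  obtain ⟨a, haP⟩ := hne
  set V : Submodule ℝ (ℝ × ℝ) := (affineSpan ℝ P).direction with hV
  have hne' : (↑(affineSpan ℝ P) : Set (ℝ × ℝ)).Nonempty := (affineSpan_nonempty ℝ).2 ⟨a, haP⟩
  have hVtop : V ≠ ⊤ := by
    rw [hV, Ne, AffineSubspace.direction_eq_top_iff_of_nonempty hne']
    exact hspan
  have hkey : ∃ u : ℝ × ℝ, u ≠ 0 ∧ V ≤ Submodule.span ℝ {u} := by
    rcases eq_or_ne V ⊥ with hbot | hbot
    · exact ⟨(1, 0), by simp [Prod.ext_iff], hbot ▸ bot_le⟩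
    · obtain ⟨u, huV, hu0⟩ := Submodule.exists_mem_ne_zero_of_ne_bot hbot
      have hle : Submodule.span ℝ {u} ≤ V := (Submodule.span_singleton_le_iff_mem u V).2 huV
      have hfr : Module.finrank ℝ V < 2 := by
        have := Submodule.finrank_lt (K := ℝ) (V := ℝ × ℝ) hVtop
        simpa using this
      have h1 : Module.finrank ℝ (Submodule.span ℝ {u}) = 1 := finrank_span_singleton hu0
      have : V = Submodule.span ℝ {u} :=
        (Submodule.eq_of_le_of_finrank_le hle (by omega)).symm
      exact ⟨u, hu0, this.le⟩
  obtain ⟨u, hu0, hVle⟩ := hkey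
  refine ⟨u, hu0, a, fun x hx => ?_⟩
  have hxa : x - a ∈ V := by
    have h1 : x ∈ affineSpan ℝ P := subset_affineSpan ℝ P hx
    have h2 : a ∈ affineSpan ℝ P := subset_affineSpan ℝ P haP
    simpa using AffineSubspace.vsub_mem_direction h1 h2
  obtain ⟨r, hr⟩ := Submodule.mem_span_singleton.1 (hVle hxa)
  exact ⟨r, by rw [hr]; abel⟩

lemma para_pos {P Q : Set (ℝ × ℝ)} (hPc : Convex ℝ P) (hQc : Convex ℝ Q)
    {p p' q q' : ℝ × ℝ} (hp : p ∈ P) (hp' : p' ∈ P) (hq : q ∈ Q) (hq' : q' ∈ Q)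
    (hdet : (p'.1 - p.1) * (q'.2 - q.2) - (p'.2 - p.2) * (q'.1 - q.1) ≠ 0) :
    0 < volume (P + Q) := by
  set u : ℝ × ℝ := p' - p with hu
  set v : ℝ × ℝ := q' - q with hv
  set d : ℝ := u.1 * v.2 - u.2 * v.1 with hd
  have hd0 : d ≠ 0 := by simpa [hd, hu, hv] using hdet
  set flin : (ℝ × ℝ) →ₗ[ℝ] (ℝ × ℝ) :=
    IsLinearMap.mk' (fun x : ℝ × ℝ => x.1 • u + x.2 • v)
      (by constructor <;> intros <;>
        simp [Prod.fst_add, Prod.snd_add, smul_eq_mul, smul_smul] <;> module) with hflin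
  set f : (ℝ × ℝ) →L[ℝ] (ℝ × ℝ) := LinearMap.toContinuousLinearMap flin with hf
  have hsurj : Function.Surjective f := by
    intro y
    refine ⟨((y.1 * v.2 - y.2 * v.1) / d, (u.1 * y.2 - u.2 * y.1) / d), ?_⟩
    show ((y.1 * v.2 - y.2 * v.1) / d) • u + ((u.1 * y.2 - u.2 * y.1) / d) • v = y
    have : ∀ z : ℝ × ℝ, z = (z.1, z.2) := fun z => rfl
    rw [Prod.ext_iff]
    constructor <;> · simp [Prod.smul_fst, Prod.smul_snd, smul_eq_mul]; field_simp [hd]; ring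
  have hopen : IsOpenMap f := f.isOpenMap hsurj
  set O : Set (ℝ × ℝ) := f '' (Set.Ioo (0:ℝ) 1 ×ˢ Set.Ioo (0:ℝ) 1) with hO
  have hOopen : IsOpen O := hopen _ (isOpen_Ioo.prod isOpen_Ioo)
  have hOne : O.Nonempty := ⟨f (1/2, 1/2), ⟨(1/2, 1/2), by norm_num, rfl⟩⟩
  have hsub : (fun x => (p + q) + x) '' O ⊆ P + Q := by
    rintro - ⟨-, ⟨⟨s, t⟩, ⟨hs, ht⟩, rfl⟩, rfl⟩
    have h1 : p + s • u ∈ P := by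
      have := hPc.add_smul_sub_mem hp hp' ⟨hs.1.le, hs.2.le⟩
      simpa [hu] using this
    have h2 : q + t • v ∈ Q := by
      have := hQc.add_smul_sub_mem hq hq' ⟨ht.1.le, ht.2.le⟩
      simpa [hv] using this
    have : (p + q) + f (s, t) = (p + s • u) + (q + t • v) := by
      show (p + q) + (s • u + t • v) = _
      abel
    show p + q + f (s, t) ∈ P + Q
    rw [this]
    exact Set.add_mem_add h1 h2
  have hpos : 0 < volume O := hOopen.measure_pos volume hOne
  calc 0 < volume O := hpos
    _ = volume ((fun x => (p + q) + x) '' O) := by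
        rw [Set.image_add_left, measure_preimage_add]
    _ ≤ volume (P + Q) := measure_mono hsub
lemma hull_le {S : Finset (ℝ × ℝ)} (α β M : ℝ) (h : ∀ s ∈ S, α * s.1 + β * s.2 ≤ M) :
    ∀ x ∈ convexHull ℝ (S : Set (ℝ × ℝ)), α * x.1 + β * x.2 ≤ M := by
  intro x hx
  have hsub : (S : Set (ℝ × ℝ)) ⊆ {p : ℝ × ℝ | α * p.1 + β * p.2 ≤ M} := fun s hs => h s hs
  have := convexHull_min hsub (convex_halfSpace_le (lin_ilm α β) M)
  exact this hx

lemma pos_interior {P : Set (ℝ × ℝ)} (hconv : Convex ℝ P) (hpos : volume P ≠ 0) :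
    (interior P).Nonempty := by
  by_contra h
  rw [Set.not_nonempty_iff_eq_empty] at h
  have hspan : affineSpan ℝ P ≠ ⊤ := by
    intro htop
    rw [← hconv.interior_nonempty_iff_affineSpan_eq_top, h] at htop
    exact Set.not_nonempty_empty htop
  exact hpos (measure_mono_null (subset_affineSpan ℝ P)
    (Measure.addHaar_affineSubspace volume _ hspan))

/-- touching lemma -/
lemma touching (α β : ℝ) (hαβ : ¬(α = 0 ∧ β = 0)) {P Q : Set (ℝ × ℝ)}
    (M : ℝ) (hM : ∀ x ∈ P, α * x.1 + β * x.2 ≤ M)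
    {q₀ : ℝ × ℝ} (hq₀ : q₀ ∈ Q)
    (hq₀min : ∀ y ∈ Q, α * q₀.1 + β * q₀.2 ≤ α * y.1 + β * y.2)
    (B : Set (ℝ × ℝ)) (hBm : MeasurableSet B)
    (hBhalf : ∀ x ∈ B, M + (α * q₀.1 + β * q₀.2) ≤ α * x.1 + β * x.2)
    (hBsub : B ⊆ P + Q) :
    volume P + volume B ≤ volume (P + Q) := by
  set A : Set (ℝ × ℝ) := (fun x => q₀ + x) '' P with hA
  have hAvol : volume A = volume P := by rw [hA, Set.image_add_left, measure_preimage_add]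
  have hAsub : A ⊆ P + Q := by
    rintro - ⟨p, hp, rfl⟩
    show q₀ + p ∈ P + Q
    rw [show q₀ + p = p + q₀ by abel]
    exact Set.add_mem_add hp hq₀
  have hABnull : volume (A ∩ B) = 0 := by
    refine measure_mono_null (t := {x : ℝ × ℝ | α * x.1 + β * x.2 = M + (α * q₀.1 + β * q₀.2)})
      ?_ (hyperplane_null α β _ hαβ)
    rintro x ⟨⟨p, hp, rfl⟩, hxB⟩
    have h1 : α * (q₀ + p).1 + β * (q₀ + p).2 = (α * q₀.1 + β * q₀.2) + (α * p.1 + β * p.2) := by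
      simp [Prod.fst_add, Prod.snd_add]; ring
    have h2 := hM p hp
    have h3 := hBhalf _ hxB
    simp only [Set.mem_setOf_eq]
    linarith
  have hkey := measure_union_add_inter (μ := volume) A hBm
  rw [hABnull, add_zero] at hkey
  calc volume P + volume B = volume A + volume B := by rw [hAvol]
    _ = volume (A ∪ B) := hkey.symm
    _ ≤ volume (P + Q) := measure_mono (Set.union_subset hAsub hBsub)

lemma lin_add (α β : ℝ) (x y : ℝ × ℝ) :
    α * (x + y).1 + β * (x + y).2 = (α * x.1 + β * x.2) + (α * y.1 + β * y.2) := by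
  simp [Prod.fst_add, Prod.snd_add]; ring

/-- strict gain from translating P by two distinct points of Q -/
lemma strict_trans {P Q : Set (ℝ × ℝ)} (hPcomp : IsCompact P) (hPconv : Convex ℝ P)
    (hP0 : volume P ≠ 0) {q₀ q₁ : ℝ × ℝ} (hq₀ : q₀ ∈ Q) (hq₁ : q₁ ∈ Q) (hne : q₀ ≠ q₁) :
    volume P < volume (P + Q) := by
  have hint := pos_interior hPconv hP0
  have hu : q₁ - q₀ ≠ 0 := sub_ne_zero.2 (Ne.symm hne)
  have hgain := segment_gain hPcomp hPconv hint hu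
  set W : Set (ℝ × ℝ) := P ∪ (fun x => (q₁ - q₀) + x) '' P with hW
  have himg : volume ((fun x => q₀ + x) '' W) = volume W := by
    rw [Set.image_add_left, measure_preimage_add]
  have hsub : (fun x => q₀ + x) '' W ⊆ P + Q := by
    rintro - ⟨x, hx, rfl⟩
    show q₀ + x ∈ P + Q
    rcases hx with hx | ⟨y, hy, rfl⟩
    · rw [show q₀ + x = x + q₀ by abel]
      exact Set.add_mem_add hx hq₀
    · rw [show q₀ + ((q₁ - q₀) + y) = y + q₁ by abel]
      exact Set.add_mem_add hy hq₁
  calc volume P < volume W := hgain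
    _ = volume ((fun x => q₀ + x) '' W) := himg.symm
    _ ≤ volume (P + Q) := measure_mono hsub

/-- Brunn–Minkowski-type inequality for convex polygons in the plane: if `P` and `Q` are
convex hulls of nonempty finite subsets of `ℝ²`, then
`vol(P + Q) ≥ vol(P) + vol(Q)`, with equality if and only if `P` is a singleton, `Q` is a
singleton, or `P` and `Q` are contained in parallel lines. -/
theorem volume_minkowski_sum_ge (S T : Finset (ℝ × ℝ))
    (hS : S.Nonempty) (hT : T.Nonempty)
    (P Q : Set (ℝ × ℝ))
    (hP : P = convexHull ℝ (S : Set (ℝ × ℝ)))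
    (hQ : Q = convexHull ℝ (T : Set (ℝ × ℝ))) :
    volume P + volume Q ≤ volume (P + Q) ∧
    (volume (P + Q) = volume P + volume Q ↔
      (∃ a, P = {a}) ∨ (∃ b, Q = {b}) ∨
      (∃ u : ℝ × ℝ, u ≠ 0 ∧ ∃ a b : ℝ × ℝ,
        P ⊆ {x | ∃ r : ℝ, x = a + r • u} ∧ Q ⊆ {x | ∃ r : ℝ, x = b + r • u})) := by
  have hPconv : Convex ℝ P := hP ▸ convex_convexHull ℝ _
  have hQconv : Convex ℝ Q := hQ ▸ convex_convexHull ℝ _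
  have hPcomp : IsCompact P := hP ▸ S.finite_toSet.isCompact_convexHull ℝ
  have hQcomp : IsCompact Q := hQ ▸ T.finite_toSet.isCompact_convexHull ℝ
  obtain ⟨s₀, hs₀⟩ := hS
  obtain ⟨t₀, ht₀⟩ := hT
  have hPne : P.Nonempty := ⟨s₀, hP ▸ subset_convexHull ℝ _ hs₀⟩
  have hQne : Q.Nonempty := ⟨t₀, hQ ▸ subset_convexHull ℝ _ ht₀⟩
  have hPfin : volume P ≠ ⊤ := hPcomp.measure_lt_top.ne
  have hQfin : volume Q ≠ ⊤ := hQcomp.measure_lt_top.ne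
  -- base inequality
  obtain ⟨p₀, hp₀P, hp₀max⟩ := hPcomp.exists_isMaxOn hPne continuous_fst.continuousOn
  obtain ⟨q₀, hq₀Q, hq₀min⟩ := hQcomp.exists_isMinOn hQne continuous_fst.continuousOn
  have base : volume P + volume Q ≤ volume (P + Q) := by
    have hM : ∀ x ∈ P, (1:ℝ) * x.1 + 0 * x.2 ≤ p₀.1 := by
      intro x hx; have := hp₀max hx; simpa using this
    have hmin : ∀ y ∈ Q, (1:ℝ) * q₀.1 + 0 * q₀.2 ≤ 1 * y.1 + 0 * y.2 := by
      intro y hy; have := hq₀min hy; simpa using this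
    have hBm : MeasurableSet ((fun x => p₀ + x) '' Q) :=
      (hQcomp.image (by fun_prop : Continuous (fun x : ℝ × ℝ => p₀ + x))).measurableSet
    have hBhalf : ∀ x ∈ (fun x => p₀ + x) '' Q,
        p₀.1 + ((1:ℝ) * q₀.1 + 0 * q₀.2) ≤ 1 * x.1 + 0 * x.2 := by
      rintro - ⟨y, hy, rfl⟩
      have h1 : q₀.1 ≤ y.1 := hq₀min hy
      show p₀.1 + ((1:ℝ) * q₀.1 + 0 * q₀.2) ≤ 1 * (p₀ + y).1 + 0 * (p₀ + y).2
      simp [Prod.fst_add]; linarith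
    have hBsub : (fun x => p₀ + x) '' Q ⊆ P + Q := by
      rintro - ⟨y, hy, rfl⟩; exact Set.add_mem_add hp₀P hy
    have htch := touching 1 0 (by norm_num) p₀.1 hM hq₀Q hmin _ hBm hBhalf hBsub
    rwa [show volume ((fun x => p₀ + x) '' Q) = volume Q by
      rw [Set.image_add_left, measure_preimage_add]] at htch
  refine ⟨base, ?_, ?_⟩
  · -- forward direction
    intro hEq
    by_cases hsp : ∃ a, P = {a}
    · exact Or.inl hsp
    by_cases hsq : ∃ b, Q = {b}
    · exact Or.inr (Or.inl hsq)
    -- both P and Q have two distinct points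
    have hPt2 : ∃ p p', p ∈ P ∧ p' ∈ P ∧ p ≠ p' := by
      by_contra h; push_neg at h
      obtain ⟨p, hp⟩ := hPne
      exact hsp ⟨p, Set.eq_singleton_iff_unique_mem.2 ⟨hp, fun x hx => h x p hx hp⟩⟩
    have hQt2 : ∃ q q', q ∈ Q ∧ q' ∈ Q ∧ q ≠ q' := by
      by_contra h; push_neg at h
      obtain ⟨q, hq⟩ := hQne
      exact hsq ⟨q, Set.eq_singleton_iff_unique_mem.2 ⟨hq, fun x hx => h x q hx hq⟩⟩
    obtain ⟨p, p', hpP, hp'P, hpne⟩ := hPt2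
    obtain ⟨q, q', hqQ, hq'Q, hqne⟩ := hQt2
    by_cases hP0 : volume P = 0
    · by_cases hQ0 : volume Q = 0
      · -- both degenerate: lines, necessarily parallel
        obtain ⟨u, hu0, a, hPa⟩ := null_to_line hPconv hPne hP0
        obtain ⟨v, hv0, b, hQb⟩ := null_to_line hQconv hQne hQ0
        by_cases hdep : ∃ c : ℝ, v = c • u
        · obtain ⟨c, rfl⟩ := hdep
          refine Or.inr (Or.inr ⟨u, hu0, a, b, fun x hx => hPa x hx, fun x hx => ?_⟩)
          obtain ⟨r, hr⟩ := hQb x hx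
          exact ⟨r * c, by rw [hr, mul_smul]⟩
        · exfalso
          -- u, v independent; build a nondegenerate parallelogram inside P + Q
          have hdet : u.1 * v.2 - u.2 * v.1 ≠ 0 := by
            intro h
            have hu12 : u.1 ≠ 0 ∨ u.2 ≠ 0 := by
              by_contra hc; push_neg at hc; exact hu0 (Prod.ext hc.1 hc.2)
            rcases hu12 with h1 | h1
            · exact hdep ⟨v.1 / u.1, Prod.ext (by rw [Prod.smul_fst, smul_eq_mul]; field_simp) (by rw [Prod.smul_snd, smul_eq_mul]; field_simp; nlinarith)⟩
            · exact hdep ⟨v.2 / u.2, Prod.ext (by rw [Prod.smul_fst, smul_eq_mul]; field_simp; nlinarith) (by rw [Prod.smul_snd, smul_eq_mul]; field_simp)⟩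
          obtain ⟨r₁, hr₁⟩ := hPa p hpP
          obtain ⟨r₂, hr₂⟩ := hPa p' hp'P
          obtain ⟨s₁, hs₁'⟩ := hQb q hqQ
          obtain ⟨s₂, hs₂'⟩ := hQb q' hq'Q
          have hrne : r₂ - r₁ ≠ 0 := by
            intro h
            have : r₂ = r₁ := by linarith
            exact hpne (by rw [hr₁, hr₂, this])
          have hsne : s₂ - s₁ ≠ 0 := by
            intro h
            have : s₂ = s₁ := by linarith
            exact hqne (by rw [hs₁', hs₂', this])
          have hdet2 : (p'.1 - p.1) * (q'.2 - q.2) - (p'.2 - p.2) * (q'.1 - q.1) ≠ 0 := by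
            have e1 : p'.1 - p.1 = (r₂ - r₁) * u.1 := by
              rw [hr₁, hr₂]; simp [Prod.fst_add, Prod.smul_fst, smul_eq_mul]; ring
            have e2 : p'.2 - p.2 = (r₂ - r₁) * u.2 := by
              rw [hr₁, hr₂]; simp [Prod.snd_add, Prod.smul_snd, smul_eq_mul]; ring
            have e3 : q'.1 - q.1 = (s₂ - s₁) * v.1 := by
              rw [hs₁', hs₂']; simp [Prod.fst_add, Prod.smul_fst, smul_eq_mul]; ring
            have e4 : q'.2 - q.2 = (s₂ - s₁) * v.2 := by
              rw [hs₁', hs₂']; simp [Prod.snd_add, Prod.smul_snd, smul_eq_mul]; ring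
            rw [e1, e2, e3, e4]
            have : (r₂ - r₁) * u.1 * ((s₂ - s₁) * v.2) - (r₂ - r₁) * u.2 * ((s₂ - s₁) * v.1)
                = (r₂ - r₁) * (s₂ - s₁) * (u.1 * v.2 - u.2 * v.1) := by ring
            rw [this]
            exact mul_ne_zero (mul_ne_zero hrne hsne) hdet
          have hpos := para_pos hPconv hQconv hpP hp'P hqQ hq'Q hdet2
          rw [hEq, hP0, hQ0, add_zero] at hpos
          exact lt_irrefl _ hpos
      · -- volume P = 0, volume Q ≠ 0 : strict, contradiction
        exfalso
        have := strict_trans hQcomp hQconv hQ0 hpP hp'P hpne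
        rw [add_comm Q P, hEq, hP0, zero_add] at this
        exact lt_irrefl _ this
    · by_cases hQ0 : volume Q = 0
      · exfalso
        have := strict_trans hPcomp hPconv hP0 hqQ hq'Q hqne
        rw [hEq, hQ0, add_zero] at this
        exact lt_irrefl _ this
      · -- both nondegenerate : strict via an edge of P
        exfalso
        have hQint := pos_interior hQconv hQ0
        -- S has two distinct points
        have hs2 : ∃ s₁ ∈ S, s₁ ≠ s₀ := by
          by_contra h; push_neg at h
          refine hsp ⟨s₀, ?_⟩
          rw [hP, show (S : Set (ℝ × ℝ)) = {s₀} from ?_, convexHull_singleton]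
          ext x
          simp only [Finset.coe_insert, Set.mem_singleton_iff, Finset.mem_coe]
          exact ⟨fun hx => h x hx, fun hx => hx ▸ hs₀⟩
        obtain ⟨s₁, hs₁S, hs₁ne⟩ := hs2
        obtain ⟨α, β, hαβ, v, w, hvS, hwS, hvw, hmaxS, hLw⟩ := exists_edge S hs₁S hs₀ hs₁ne
        set M : ℝ := α * v.1 + β * v.2 with hMdef
        have hM : ∀ x ∈ P, α * x.1 + β * x.2 ≤ M := by
          rw [hP]; exact hull_le α β M hmaxS
        have hLcont : Continuous (fun x : ℝ × ℝ => α * x.1 + β * x.2) := by fun_prop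
        obtain ⟨n₀, hn₀Q, hn₀min⟩ := hQcomp.exists_isMinOn hQne hLcont.continuousOn
        set uu : ℝ × ℝ := w - v with huu
        have huune : uu ≠ 0 := sub_ne_zero.2 (Ne.symm hvw)
        set W : Set (ℝ × ℝ) := Q ∪ (fun x => uu + x) '' Q with hW
        have hWcomp : IsCompact W := hQcomp.union
          (hQcomp.image (by fun_prop : Continuous (fun x : ℝ × ℝ => uu + x)))
        set B : Set (ℝ × ℝ) := (fun x => v + x) '' W with hB
        have hBm : MeasurableSet B :=
          ((hWcomp.image (by fun_prop : Continuous (fun x : ℝ × ℝ => v + x)))).measurableSet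
        have hvP : v ∈ P := hP ▸ subset_convexHull ℝ _ hvS
        have hwP : w ∈ P := hP ▸ subset_convexHull ℝ _ hwS
        have hBsub : B ⊆ P + Q := by
          rintro - ⟨x, hx, rfl⟩
          show v + x ∈ P + Q
          rcases hx with hx | ⟨y, hy, rfl⟩
          · exact Set.add_mem_add hvP hx
          · rw [show v + (uu + y) = w + y by rw [huu]; abel]
            exact Set.add_mem_add hwP hy
        have hBhalf : ∀ x ∈ B, M + (α * n₀.1 + β * n₀.2) ≤ α * x.1 + β * x.2 := by
          rintro - ⟨x, hx, rfl⟩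
          show M + (α * n₀.1 + β * n₀.2) ≤ α * (v + x).1 + β * (v + x).2
          rcases hx with hx | ⟨y, hy, rfl⟩
          · have h1 : α * n₀.1 + β * n₀.2 ≤ α * x.1 + β * x.2 := hn₀min hx
            rw [lin_add]; linarith
          · have h1 : α * n₀.1 + β * n₀.2 ≤ α * y.1 + β * y.2 := hn₀min hy
            rw [show v + (uu + y) = w + y by rw [huu]; abel, lin_add]
            rw [hLw]; linarith
        have hBvol : volume Q < volume B := by
          have h1 : volume B = volume W := by
            rw [hB, Set.image_add_left, measure_preimage_add]
          rw [h1, hW]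
          exact segment_gain hQcomp hQconv hQint huune
        have htch := touching α β hαβ M hM hn₀Q (fun y hy => hn₀min hy) B hBm hBhalf hBsub
        have : volume P + volume Q < volume P + volume B :=
          ENNReal.add_lt_add_left hPfin hBvol
        rw [hEq] at htch
        exact lt_irrefl _ (lt_of_lt_of_le this htch)
  · -- backward direction
    rintro (⟨a, hPa⟩ | ⟨b, hQb⟩ | ⟨u, hu0, a, b, hPsub, hQsub⟩)
    · rw [hPa, Set.singleton_add, Set.image_add_left, measure_preimage_add,
        measure_singleton, zero_add]
    · rw [hQb, Set.add_singleton, Set.image_add_right, measure_preimage_add_right,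
        measure_singleton, add_zero]
    · have hP0 : volume P = 0 := measure_mono_null hPsub (line_null a u hu0)
      have hQ0 : volume Q = 0 := measure_mono_null hQsub (line_null b u hu0)
      have hPQ0 : volume (P + Q) = 0 := by
        refine measure_mono_null (t := {x : ℝ × ℝ | ∃ r : ℝ, x = (a + b) + r • u}) ?_
          (line_null (a + b) u hu0)
        intro z hz
        rw [Set.mem_add] at hz
        obtain ⟨x, hx, y, hy, rfl⟩ := hz
        obtain ⟨r, hr⟩ := hPsub hx
        obtain ⟨r', hr'⟩ := hQsub hy
        exact ⟨r + r', by rw [hr, hr', add_smul]; abel⟩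
      rw [hPQ0, hP0, hQ0, add_zero]
end

section
/- Let (p, q) and (p′, q′) be two pairs of coprime integers (each pair not both zero) with p·q′ − q·p′ ≠ 0, and let (x₀, y₀) and (x₀′, y₀′) be points of the torus (ℝ/ℤ)². Let C = { (x₀ + t·p, y₀ + t·q) mod ℤ² : t ∈ ℝ } and C′ = { (x₀′ + t·p′, y₀′ + t·q′) mod ℤ² : t ∈ ℝ } be the corresponding closed geodesics of the flat torus. Then the intersection C ∩ C′ is a finite set with exactly |p·q′ − q·p′| elements. -/
private lemma coe_eq_coe_aux (r s : ℝ) :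
    ((r : AddCircle (1:ℝ)) = (s : AddCircle (1:ℝ))) ↔ ∃ n : ℤ, r - s = n := by
  rw [QuotientAddGroup.eq]
  constructor
  · intro hrs
    obtain ⟨n, hn⟩ := AddSubgroup.mem_zmultiples_iff.mp hrs
    exact ⟨-n, by push_cast [zsmul_eq_mul] at hn ⊢; linarith⟩
  · rintro ⟨n, hn⟩
    exact AddSubgroup.mem_zmultiples_iff.mpr ⟨-n, by push_cast [zsmul_eq_mul]; linarith⟩

private lemma pair_eq_aux (a r a' r' : ℝ) (h : ∃ n : ℤ, (a + r) - (a' + r') = n) :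
    (a : AddCircle (1:ℝ)) + ↑r = ↑a' + ↑r' := by
  have := coe_eq_coe_aux (a + r) (a' + r') |>.mpr h
  rwa [show ((a + r : ℝ) : AddCircle (1:ℝ)) = ↑a + ↑r from rfl,
    show ((a' + r' : ℝ) : AddCircle (1:ℝ)) = ↑a' + ↑r' from rfl] at this

private lemma pair_eq_aux' (a r a' r' : ℝ)
    (h : (a : AddCircle (1:ℝ)) + ↑r = ↑a' + ↑r') :
    ∃ n : ℤ, (a + r) - (a' + r') = n := by
  apply (coe_eq_coe_aux (a + r) (a' + r')).mp
  rwa [show ((a + r : ℝ) : AddCircle (1:ℝ)) = ↑a + ↑r from rfl,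
    show ((a' + r' : ℝ) : AddCircle (1:ℝ)) = ↑a' + ↑r' from rfl]

/-- Two closed geodesics of the flat torus `(ℝ/ℤ)²`, with coprime codes `(p, q)` and
`(p′, q′)` satisfying `p·q′ − q·p′ ≠ 0`, intersect in a finite set with exactly
`|p·q′ − q·p′|` elements. -/
theorem flatTorus_geodesics_intersection_card
    (p q p' q' : ℤ) (h : Int.gcd p q = 1) (h' : Int.gcd p' q' = 1)
    (hd : p * q' - q * p' ≠ 0)
    (x₀ y₀ x₀' y₀' : AddCircle (1 : ℝ))
    (C C' : Set (AddCircle (1 : ℝ) × AddCircle (1 : ℝ)))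
    (hC : C = Set.range (fun t : ℝ =>
      (x₀ + ((t * (p : ℝ) : ℝ) : AddCircle (1 : ℝ)),
       y₀ + ((t * (q : ℝ) : ℝ) : AddCircle (1 : ℝ)))))
    (hC' : C' = Set.range (fun t : ℝ =>
      (x₀' + ((t * (p' : ℝ) : ℝ) : AddCircle (1 : ℝ)),
       y₀' + ((t * (q' : ℝ) : ℝ) : AddCircle (1 : ℝ))))) :
    (C ∩ C').Finite ∧ (C ∩ C').ncard = (p * q' - q * p').natAbs := by
  obtain ⟨a, rfl⟩ := QuotientAddGroup.mk_surjective x₀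
  obtain ⟨b, rfl⟩ := QuotientAddGroup.mk_surjective y₀
  obtain ⟨a', rfl⟩ := QuotientAddGroup.mk_surjective x₀'
  obtain ⟨b', rfl⟩ := QuotientAddGroup.mk_surjective y₀'
  set d : ℤ := p * q' - q * p' with hd_def
  have hdR : (d : ℝ) ≠ 0 := Int.cast_ne_zero.mpr hd
  have hdcast : (d : ℝ) = (p : ℝ) * q' - (q : ℝ) * p' := by rw [hd_def]; push_cast; ring
  obtain ⟨u, v, huv⟩ : ∃ u v : ℤ, u * p + v * q = 1 := by
    obtain ⟨u, v, huv⟩ := Int.isCoprime_iff_gcd_eq_one.mpr h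
    exact ⟨u, v, huv⟩
  obtain ⟨u', v', huv'⟩ : ∃ u v : ℤ, u * q' + v * p' = 1 := by
    obtain ⟨u, v, huv⟩ := Int.isCoprime_iff_gcd_eq_one.mpr
      (show Int.gcd q' p' = 1 by rwa [Int.gcd_comm])
    exact ⟨u, v, huv⟩
  set t₀ : ℝ := ((a' - a) * q' - (b' - b) * p') / d with ht₀
  set f : ℝ → AddCircle (1:ℝ) × AddCircle (1:ℝ) := fun t =>
    ((a : AddCircle (1:ℝ)) + ((t * (p : ℝ) : ℝ) : AddCircle (1 : ℝ)),
     (b : AddCircle (1:ℝ)) + ((t * (q : ℝ) : ℝ) : AddCircle (1 : ℝ))) with hf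
  set J : ℤ → AddCircle (1:ℝ) × AddCircle (1:ℝ) := fun j => f (t₀ + (j : ℝ) / d) with hJ
  -- periodicity / injectivity of J modulo d
  have per : ∀ j j' : ℤ, J j = J j' ↔ d ∣ (j - j') := by
    intro j j'
    constructor
    · intro hjj
      have h1 := congrArg Prod.fst hjj
      have h2 := congrArg Prod.snd hjj
      simp only [hJ, hf] at h1 h2
      obtain ⟨m, hm⟩ := pair_eq_aux' _ _ _ _ h1
      obtain ⟨n, hn⟩ := pair_eq_aux' _ _ _ _ h2
      have hm' : ((j : ℝ) - j') * p = m * d := by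
        field_simp at hm; linarith
      have hn' : ((j : ℝ) - j') * q = n * d := by
        field_simp at hn; linarith
      have huvR : (u : ℝ) * p + v * q = 1 := by exact_mod_cast congrArg (Int.cast : ℤ → ℝ) huv
      have key : ((j : ℝ) - j') = (u * m + v * n) * d := by
        linear_combination (u : ℝ) * hm' + (v : ℝ) * hn' - ((j:ℝ) - j') * huvR
      have : (j : ℤ) - j' = (u * m + v * n) * d := by exact_mod_cast key
      exact ⟨u * m + v * n, by linarith [this]⟩
    · rintro ⟨w, hw⟩
      have hjR : ((j : ℝ) - j') = d * w := by exact_mod_cast congrArg (Int.cast : ℤ → ℝ) hw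
      have hdiff : t₀ + (j : ℝ) / d = (t₀ + (j' : ℝ) / d) + w := by
        field_simp
        linarith
      simp only [hJ, hf, hdiff]
      refine Prod.ext ?_ ?_
      · exact pair_eq_aux _ _ _ _ ⟨w * p, by push_cast; ring⟩
      · exact pair_eq_aux _ _ _ _ ⟨w * q, by push_cast; ring⟩
  -- membership characterization
  have mem : ∀ z, z ∈ C ∩ C' ↔ ∃ j : ℤ, z = J j := by
    intro z
    constructor
    · rintro ⟨hz1, hz2⟩
      rw [hC] at hz1; rw [hC'] at hz2
      obtain ⟨t, ht⟩ := hz1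
      obtain ⟨s, hs⟩ := hz2
      have h1 : (a : AddCircle (1:ℝ)) + ((t * (p:ℝ) : ℝ) : AddCircle (1:ℝ))
          = ↑a' + ((s * (p':ℝ) : ℝ) : AddCircle (1:ℝ)) := by
        rw [← hs] at ht; exact congrArg Prod.fst ht
      have h2 : (b : AddCircle (1:ℝ)) + ((t * (q:ℝ) : ℝ) : AddCircle (1:ℝ))
          = ↑b' + ((s * (q':ℝ) : ℝ) : AddCircle (1:ℝ)) := by
        rw [← hs] at ht; exact congrArg Prod.snd ht
      obtain ⟨m, hm⟩ := pair_eq_aux' _ _ _ _ h1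
      obtain ⟨n, hn⟩ := pair_eq_aux' _ _ _ _ h2
      refine ⟨m * q' - n * p', ?_⟩
      have htd : t * d = (a' - a) * q' - (b' - b) * p' + ((m : ℝ) * q' - (n : ℝ) * p') := by
        linear_combination (q' : ℝ) * hm - (p' : ℝ) * hn + t * hdcast
      have hteq : t₀ + ((m * q' - n * p' : ℤ) : ℝ) / d = t := by
        rw [ht₀]
        field_simp
        push_cast
        linarith
      rw [← ht]
      show f t = f (t₀ + ((m * q' - n * p' : ℤ) : ℝ) / d)
      rw [hteq]
    · rintro ⟨j, rfl⟩
      constructor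
      · rw [hC]; exact ⟨t₀ + (j : ℝ) / d, rfl⟩
      · rw [hC']
        set m : ℤ := j * u' with hmm
        set n : ℤ := -(j * v') with hnn
        have hmn : m * q' - n * p' = j := by
          rw [hmm, hnn]; linear_combination j * huv'
        have hjR : (m : ℝ) * q' - (n : ℝ) * p' = j := by exact_mod_cast congrArg (Int.cast : ℤ → ℝ) hmn
        set A : ℝ := (a' - a) + m with hA
        set B : ℝ := (b' - b) + n with hB
        set t : ℝ := t₀ + (j : ℝ) / d with htt
        set s : ℝ := (A * q - B * p) / d with hss
        have htd : t * d = A * q' - B * p' := by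
          have g1 : t₀ * d = (a' - a) * q' - (b' - b) * p' := by
            rw [ht₀]; exact div_mul_cancel₀ _ hdR
          have g2 : ((j : ℝ) / d) * d = j := div_mul_cancel₀ _ hdR
          rw [htt, hA, hB]
          linear_combination g1 + g2 - hjR
        have hsd : s * d = A * q - B * p := by
          rw [hss]; field_simp
        have e1 : t * p - s * p' = A := by
          have : (t * p - s * p') * d = A * d := by
            linear_combination (p : ℝ) * htd - (p' : ℝ) * hsd - A * hdcast
          exact mul_right_cancel₀ hdR this
        have e2 : t * q - s * q' = B := by
          have : (t * q - s * q') * d = B * d := by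
            linear_combination (q : ℝ) * htd - (q' : ℝ) * hsd - B * hdcast
          exact mul_right_cancel₀ hdR this
        rw [hA] at e1
        rw [hB] at e2
        refine ⟨s, ?_⟩
        simp only [hJ, hf]
        refine Prod.ext ?_ ?_
        · exact (pair_eq_aux _ _ _ _ ⟨m, by rw [← htt]; push_cast; linarith [e1]⟩).symm
        · exact (pair_eq_aux _ _ _ _ ⟨n, by rw [← htt]; push_cast; linarith [e2]⟩).symm
  -- the finite set
  set S : Finset (AddCircle (1:ℝ) × AddCircle (1:ℝ)) :=
    (Finset.range d.natAbs).image (fun k : ℕ => J (k : ℤ)) with hS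
  have hCC : C ∩ C' = ↑S := by
    ext z
    rw [mem z]
    simp only [hS, Finset.coe_image, Finset.coe_range, Set.mem_image, Set.mem_Iio]
    constructor
    · rintro ⟨j, rfl⟩
      have habs : (0:ℤ) < |d| := abs_pos.mpr hd
      have h1 : 0 ≤ j % |d| := Int.emod_nonneg j (by simpa using hd)
      have h2 : j % |d| < |d| := Int.emod_lt_of_pos j habs
      have habs2 : |d| = (d.natAbs : ℤ) := Int.abs_eq_natAbs d
      refine ⟨(j % |d|).natAbs, by omega, ?_⟩
      symm
      rw [per]
      have hcast : ((j % |d|).natAbs : ℤ) = j % |d| := Int.natAbs_of_nonneg h1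
      rw [hcast]
      have hdvd : |d| ∣ j - (j % |d|) := by
        have := Int.mul_ediv_add_emod j |d|
        exact ⟨j / |d|, by linarith⟩
      exact (abs_dvd d _).mp hdvd
    · rintro ⟨k, _, rfl⟩
      exact ⟨(k : ℤ), rfl⟩
  have hinj : Set.InjOn (fun k : ℕ => J (k : ℤ)) ↑(Finset.range d.natAbs) := by
    intro k hk k' hk' hkk
    simp only [Finset.coe_range, Set.mem_Iio] at hk hk'
    have hdvd : d ∣ ((k : ℤ) - k') := (per _ _).mp hkk
    have : ((k : ℤ) - k') = 0 := by
      refine Int.eq_zero_of_dvd_of_natAbs_lt_natAbs hdvd ?_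
      omega
    omega
  constructor
  · rw [hCC]; exact S.finite_toSet
  · rw [hCC, Set.ncard_coe_finset, hS, Finset.card_image_of_injOn hinj, Finset.card_range]
end
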